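/- Let k : [0,a] → ℂ be the restriction of a function analytic on a neighborhood of [0,a] with Taylor expansion k(t) = Σ_{l≥0} a_l t^l valid for |t| < ρ₀, and let λ ∈ ℂ with λ ∉ ℤ. Then for every 0 < ε < min(ρ₀, a), the quantity ∫_ε^a k(t) t^{-λ} dt + Σ_{l=0}^{∞} a_l ε^{l-λ+1}/(l-λ+1) is independent of ε. -/

import Mathlib

open Filter Topology MeasureTheory intervalIntegral Complex

section Aux

variable {lam : ℂ}

lemma aux_ne_zero (hlam : ∀ m : ℤ, lam ≠ (m : ℂ)) (l : ℕ) :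
    (l : ℂ) - lam + 1 ≠ 0 := by
  intro h
  apply hlam ((l : ℤ) + 1)
  push_cast
  linear_combination -h

lemma aux_ne_neg_one (hlam : ∀ m : ℤ, lam ≠ (m : ℂ)) (l : ℕ) :
    (l : ℂ) - lam ≠ -1 := by
  intro h
  exact aux_ne_zero hlam l (by linear_combination h)

lemma aux_bound (hlam : ∀ m : ℤ, lam ≠ (m : ℂ)) :
    ∃ C : ℝ, 0 ≤ C ∧ ∀ l : ℕ, ‖(l : ℂ) - lam + 1‖⁻¹ ≤ C := by
  have h1 : Tendsto (fun l : ℕ => ‖(l : ℂ) - lam + 1‖) atTop atTop := by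
    apply tendsto_atTop_mono (f := fun l : ℕ => (l : ℝ) + 1 - lam.re)
    · intro l
      have : ((l : ℂ) - lam + 1).re = (l : ℝ) + 1 - lam.re := by
        simp [Complex.sub_re, Complex.add_re]; ring
      rw [← this]
      exact Complex.re_le_norm _
    · have := tendsto_natCast_atTop_atTop (R := ℝ)
      exact tendsto_atTop_add_const_right _ (1 - lam.re)
        (by simpa using this.comp tendsto_id) |>.congr (by intro l; ring)
  have h2 : Tendsto (fun l : ℕ => ‖(l : ℂ) - lam + 1‖⁻¹) atTop (𝓝 0) :=
    h1.inv_tendsto_atTop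
  obtain ⟨C, hC⟩ := h2.bddAbove_range
  refine ⟨max C 0, le_max_right _ _, fun l => le_trans ?_ (le_max_left _ _)⟩
  exact hC (Set.mem_range_self l)

end Aux

theorem finite_part_candidate_eps_independent (a ρ₀ : ℝ) (ha : 0 < a) (hρ : 0 < ρ₀)
    (k : ℂ → ℂ) (A : ℕ → ℂ)
    (hk : ∀ x ∈ Set.Icc (0 : ℝ) a, AnalyticAt ℂ k (x : ℂ))
    (hA : ∀ z : ℂ, ‖z‖ < ρ₀ → HasSum (fun l : ℕ => A l * z ^ l) (k z))
    (lam : ℂ) (hlam : ∀ m : ℤ, lam ≠ (m : ℂ)) :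
    ∀ ε₁ ε₂ : ℝ, 0 < ε₁ → ε₁ < min ρ₀ a → 0 < ε₂ → ε₂ < min ρ₀ a →
      ((∫ t in ε₁..a, k (t : ℂ) * (t : ℂ) ^ (-lam)) +
          ∑' l : ℕ, A l * (ε₁ : ℂ) ^ ((l : ℂ) - lam + 1) / ((l : ℂ) - lam + 1)) =
        ((∫ t in ε₂..a, k (t : ℂ) * (t : ℂ) ^ (-lam)) +
          ∑' l : ℕ, A l * (ε₂ : ℂ) ^ ((l : ℂ) - lam + 1) / ((l : ℂ) - lam + 1)) := by
  obtain ⟨C, hC0, hC⟩ := aux_bound hlam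
  -- summability of the norm series at radius r < ρ₀
  have hsum_norm : ∀ r : ℝ, 0 < r → r < ρ₀ → Summable (fun l : ℕ => ‖A l‖ * r ^ l) := by
    intro r hr0 hrρ
    have h1 : Summable (fun l : ℕ => A l * (r : ℂ) ^ l) :=
      (hA (r : ℂ) (by simpa [abs_of_pos hr0] using hrρ)).summable
    have h2 : Summable (fun l : ℕ => ‖A l * (r : ℂ) ^ l‖) :=
      (summable_norm_iff).mpr h1
    refine h2.congr fun l => ?_
    simp [norm_mul, norm_pow, abs_of_pos hr0]
  -- summability of the tsum terms
  have hS : ∀ ε : ℝ, 0 < ε → ε < ρ₀ →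
      Summable (fun l : ℕ => A l * (ε : ℂ) ^ ((l : ℂ) - lam + 1) / ((l : ℂ) - lam + 1)) := by
    intro ε hε0 hερ
    apply Summable.of_norm_bounded
      (g := fun l : ℕ => C * ε ^ (1 - lam.re) * (‖A l‖ * ε ^ l))
      (((hsum_norm ε hε0 hερ).mul_left _))
    intro l
    have hnorm : ‖(ε : ℂ) ^ ((l : ℂ) - lam + 1)‖ = ε ^ ((l : ℝ) + 1 - lam.re) := by
      rw [Complex.norm_cpow_eq_rpow_re_of_pos hε0]
      congr 1
      simp [Complex.sub_re, Complex.add_re]; ring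
    have hsplit : ε ^ ((l : ℝ) + 1 - lam.re) = ε ^ (l : ℕ) * ε ^ (1 - lam.re) := by
      rw [← Real.rpow_natCast ε l, ← Real.rpow_add hε0]
      ring_nf
    rw [norm_div, norm_mul, hnorm, hsplit]
    rw [div_eq_mul_inv]
    calc ‖A l‖ * (ε ^ l * ε ^ (1 - lam.re)) * ‖(l : ℂ) - lam + 1‖⁻¹
        ≤ ‖A l‖ * (ε ^ l * ε ^ (1 - lam.re)) * C :=
          mul_le_mul_of_nonneg_left (hC l)
            (by positivity)
      _ = C * ε ^ (1 - lam.re) * (‖A l‖ * ε ^ l) := by ring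
  -- continuity of the integrand on positive reals within [0, a]
  have hcont : ∀ {b c : ℝ}, 0 < b → c ≤ a → b ≤ c →
      ContinuousOn (fun t : ℝ => k (t : ℂ) * (t : ℂ) ^ (-lam)) (Set.Icc b c) := by
    intro b c hb hca hbc
    intro t ht
    have ht0 : 0 < t := lt_of_lt_of_le hb ht.1
    have hta : t ≤ a := le_trans ht.2 hca
    have h1 : ContinuousAt (fun t : ℝ => k (t : ℂ)) t :=
      (hk t ⟨ht0.le, hta⟩).continuousAt.comp Complex.continuous_ofReal.continuousAt
    have h2 : ContinuousAt (fun t : ℝ => (t : ℂ) ^ (-lam)) t :=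
      Complex.continuousAt_ofReal_cpow_const t (-lam) (Or.inr ht0.ne')
    exact (h1.mul h2).continuousWithinAt
  -- the key lemma: the interval integral between ε₁ and ε₂ equals the tsum difference
  have key : ∀ ε₁ ε₂ : ℝ, 0 < ε₁ → ε₁ ≤ ε₂ → ε₂ < ρ₀ →
      (∫ t in ε₁..ε₂, k (t : ℂ) * (t : ℂ) ^ (-lam)) =
        ∑' l : ℕ, (A l * (ε₂ : ℂ) ^ ((l : ℂ) - lam + 1) / ((l : ℂ) - lam + 1) -
          A l * (ε₁ : ℂ) ^ ((l : ℂ) - lam + 1) / ((l : ℂ) - lam + 1)) := by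
    intro ε₁ ε₂ h1 h12 h2ρ
    have h0uIcc : (0 : ℝ) ∉ Set.uIcc ε₁ ε₂ := by
      rw [Set.uIcc_of_le h12, Set.mem_Icc]
      rintro ⟨hle, -⟩; linarith
    -- rewrite the integrand as a tsum on the interval
    have hEq : Set.EqOn (fun t : ℝ => k (t : ℂ) * (t : ℂ) ^ (-lam))
        (fun t : ℝ => ∑' l : ℕ, A l * (t : ℂ) ^ ((l : ℂ) - lam)) (Set.uIcc ε₁ ε₂) := by
      intro t ht
      rw [Set.uIcc_of_le h12] at ht
      have ht0 : 0 < t := lt_of_lt_of_le h1 ht.1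
      have htρ : t < ρ₀ := lt_of_le_of_lt ht.2 h2ρ
      have hsum := (hA (t : ℂ) (by simpa [abs_of_pos ht0] using htρ)).mul_right
        ((t : ℂ) ^ (-lam))
      show k (t : ℂ) * (t : ℂ) ^ (-lam) = ∑' l : ℕ, A l * (t : ℂ) ^ ((l : ℂ) - lam)
      rw [← hsum.tsum_eq]
      refine tsum_congr fun l => ?_
      have htne : (t : ℂ) ≠ 0 := Complex.ofReal_ne_zero.mpr ht0.ne'
      rw [mul_assoc, ← Complex.cpow_natCast, ← Complex.cpow_add _ _ htne, sub_eq_add_neg]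
    rw [intervalIntegral.integral_congr hEq, intervalIntegral.integral_of_le h12]
    -- integrability of each term
    have hFcont : ∀ l : ℕ, ContinuousOn (fun t : ℝ => A l * (t : ℂ) ^ ((l : ℂ) - lam))
        (Set.Icc ε₁ ε₂) := by
      intro l
      apply continuousOn_const.mul
      intro t ht
      exact (Complex.continuousAt_ofReal_cpow_const t _
        (Or.inr (lt_of_lt_of_le h1 ht.1).ne')).continuousWithinAt
    have hFint : ∀ l : ℕ, Integrable (fun t : ℝ => A l * (t : ℂ) ^ ((l : ℂ) - lam))
        (volume.restrict (Set.Ioc ε₁ ε₂)) := fun l =>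
      ((hFcont l).integrableOn_Icc).mono_set Set.Ioc_subset_Icc_self
    -- the bound on each norm integral
    set B : ℝ := ε₁ ^ (-lam.re) + ε₂ ^ (-lam.re) with hB
    have hBnn : 0 ≤ B := add_nonneg (Real.rpow_nonneg h1.le _)
      (Real.rpow_nonneg ((h1.trans_le h12)).le _)
    have hbound : ∀ l : ℕ, ∀ t ∈ Set.Ioc ε₁ ε₂,
        ‖A l * (t : ℂ) ^ ((l : ℂ) - lam)‖ ≤ ‖A l‖ * ε₂ ^ l * B := by
      intro l t ht
      have ht0 : 0 < t := lt_trans h1 ht.1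
      have hnorm : ‖(t : ℂ) ^ ((l : ℂ) - lam)‖ = t ^ (l : ℕ) * t ^ (-lam.re) := by
        rw [Complex.norm_cpow_eq_rpow_re_of_pos ht0]
        have : ((l : ℂ) - lam).re = (l : ℝ) + (-lam.re) := by
          simp [Complex.sub_re]; ring
        rw [this, Real.rpow_add ht0, Real.rpow_natCast]
      have h3 : t ^ (-lam.re) ≤ B := by
        rcases le_or_gt 0 (-lam.re) with h | h
        · have := Real.rpow_le_rpow ht0.le ht.2 h
          rw [hB]; nlinarith [Real.rpow_nonneg (le_of_lt h1) (-lam.re)]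
        · have := Real.rpow_le_rpow_of_nonpos h1 ht.1.le h.le
          rw [hB]; nlinarith [Real.rpow_nonneg (h1.trans ht.1).le (-lam.re),
            Real.rpow_nonneg (le_trans h1.le (le_trans ht.1.le ht.2)) (-lam.re)]
      have h4 : t ^ (l : ℕ) ≤ ε₂ ^ l := pow_le_pow_left₀ ht0.le ht.2 l
      rw [norm_mul, hnorm]
      have hA0 : (0:ℝ) ≤ ‖A l‖ := norm_nonneg _
      have htr : (0:ℝ) ≤ t ^ (-lam.re) := Real.rpow_nonneg ht0.le _
      have h5 : t ^ (l:ℕ) * t ^ (-lam.re) ≤ ε₂ ^ l * B :=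
        mul_le_mul h4 h3 htr (pow_nonneg (h1.le.trans h12) l)
      calc ‖A l‖ * (t ^ (l:ℕ) * t ^ (-lam.re)) ≤ ‖A l‖ * (ε₂ ^ l * B) :=
            mul_le_mul_of_nonneg_left h5 hA0
        _ = ‖A l‖ * ε₂ ^ l * B := by ring
    -- summability of the norm integrals
    have hρ2 : Summable (fun l : ℕ => ‖A l‖ * ε₂ ^ l) :=
      hsum_norm ε₂ (lt_of_lt_of_le h1 h12) h2ρ
    have hFsum : Summable (fun l : ℕ =>
        ∫ t in Set.Ioc ε₁ ε₂, ‖A l * (t : ℂ) ^ ((l : ℂ) - lam)‖) := by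
      apply Summable.of_nonneg_of_le
        (fun l => integral_nonneg fun t => norm_nonneg _)
        (fun l => ?_) (hρ2.mul_left ((ε₂ - ε₁) * B))
      calc (∫ t in Set.Ioc ε₁ ε₂, ‖A l * (t : ℂ) ^ ((l : ℂ) - lam)‖)
          ≤ ∫ _ in Set.Ioc ε₁ ε₂, ‖A l‖ * ε₂ ^ l * B := by
            apply setIntegral_mono_on ((hFint l).norm)
              (integrableOn_const measure_Ioc_lt_top.ne) measurableSet_Ioc
            exact hbound l
        _ = (ε₂ - ε₁) * (‖A l‖ * ε₂ ^ l * B) := by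
            rw [setIntegral_const, Real.volume_real_Ioc_of_le h12, smul_eq_mul]
        _ = (ε₂ - ε₁) * B * (‖A l‖ * ε₂ ^ l) := by push_cast; ring
    -- swap integral and tsum
    rw [← MeasureTheory.integral_tsum_of_summable_integral_norm hFint hFsum]
    refine tsum_congr fun l => ?_
    rw [← intervalIntegral.integral_of_le h12, intervalIntegral.integral_const_mul,
      integral_cpow (Or.inr ⟨aux_ne_neg_one hlam l, h0uIcc⟩)]
    field_simp
  -- main argument
  suffices H : ∀ ε₁ ε₂ : ℝ, 0 < ε₁ → ε₁ ≤ ε₂ → ε₂ < min ρ₀ a →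
      ((∫ t in ε₁..a, k (t : ℂ) * (t : ℂ) ^ (-lam)) +
          ∑' l : ℕ, A l * (ε₁ : ℂ) ^ ((l : ℂ) - lam + 1) / ((l : ℂ) - lam + 1)) =
        ((∫ t in ε₂..a, k (t : ℂ) * (t : ℂ) ^ (-lam)) +
          ∑' l : ℕ, A l * (ε₂ : ℂ) ^ ((l : ℂ) - lam + 1) / ((l : ℂ) - lam + 1)) by
    intro ε₁ ε₂ h1 h1' h2 h2'
    rcases le_total ε₁ ε₂ with h | h
    · exact H ε₁ ε₂ h1 h h2'
    · exact (H ε₂ ε₁ h2 h h1').symm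
  intro ε₁ ε₂ h1 h12 h2'
  have h2ρ : ε₂ < ρ₀ := lt_of_lt_of_le h2' (min_le_left _ _)
  have h2a : ε₂ < a := lt_of_lt_of_le h2' (min_le_right _ _)
  have hI1 : IntervalIntegrable (fun t : ℝ => k (t : ℂ) * (t : ℂ) ^ (-lam)) volume ε₁ ε₂ := by
    apply ContinuousOn.intervalIntegrable
    rw [Set.uIcc_of_le h12]
    exact hcont h1 h2a.le h12
  have hI2 : IntervalIntegrable (fun t : ℝ => k (t : ℂ) * (t : ℂ) ^ (-lam)) volume ε₂ a := by
    apply ContinuousOn.intervalIntegrable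
    rw [Set.uIcc_of_le h2a.le]
    exact hcont (lt_of_lt_of_le h1 h12) le_rfl h2a.le
  have hsplit := intervalIntegral.integral_add_adjacent_intervals hI1 hI2
  have hkey := key ε₁ ε₂ h1 h12 h2ρ
  have hS1 := hS ε₁ h1 (lt_of_le_of_lt h12 h2ρ)
  have hS2 := hS ε₂ (lt_of_lt_of_le h1 h12) h2ρ
  rw [Summable.tsum_sub hS2 hS1] at hkey
  rw [← hsplit, hkey]
  ring
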